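/- Let 0 < β < 1 < T, λ ≥ λ₁ > 0, and 0 ≤ s ≤ t ≤ T. Then Ψ(β, λ, s, t) := e^{-√λ(T+s-t)} / (2βλ + 2√λ e^{-√λ T}) satisfies Ψ(β, λ, s, t) ≤ (1/(2√λ₁)) · (β/T)^{(s-t)/T} · (ln(T/β))^{(s-t)/T}. -/

import Mathlib

theorem Psi_bound (β T lam lam1 s t : ℝ) (hβ0 : 0 < β) (hβ1 : β < 1) (hT : 1 < T)
    (hlam1 : 0 < lam1) (hlam : lam1 ≤ lam) (hs : 0 ≤ s) (hst : s ≤ t) (ht : t ≤ T) :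
    Real.exp (-Real.sqrt lam * (T + s - t)) /
        (2 * β * lam + 2 * Real.sqrt lam * Real.exp (-Real.sqrt lam * T)) ≤
      (1 / (2 * Real.sqrt lam1)) * (β / T) ^ ((s - t) / T) *
        (Real.log (T / β)) ^ ((s - t) / T) := by
  have hT0 : (0:ℝ) < T := lt_trans one_pos hT
  have hlam0 : 0 < lam := lt_of_lt_of_le hlam1 hlam
  set μ : ℝ := Real.sqrt lam with hμdef
  set μ1 : ℝ := Real.sqrt lam1 with hμ1def
  have hμ1 : 0 < μ1 := Real.sqrt_pos.mpr hlam1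
  have hμ0 : 0 < μ := Real.sqrt_pos.mpr hlam0
  have hμμ1 : μ1 ≤ μ := Real.sqrt_le_sqrt hlam
  have hμμ : μ * μ = lam := Real.mul_self_sqrt hlam0.le
  have hR1 : 1 < T / β := (one_lt_div hβ0).mpr (hβ1.trans hT)
  set L : ℝ := Real.log (T / β) with hLdef
  have hL0 : 0 < L := Real.log_pos hR1
  set θ : ℝ := (t - s) / T with hθdef
  have hθ0 : 0 ≤ θ := div_nonneg (sub_nonneg.mpr hst) hT0.le
  have hθ1 : θ ≤ 1 := by
    rw [hθdef, div_le_one hT0]; linarith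
  set D : ℝ := β * μ * Real.exp (μ * T) + 1 with hDdef
  have hD1 : 1 ≤ D := by
    rw [hDdef]
    have : 0 < β * μ * Real.exp (μ * T) := by positivity
    linarith
  have hD0 : 0 < D := lt_of_lt_of_le one_pos hD1
  set C : ℝ := T / (β * L) with hCdef
  have hC0 : 0 < C := by positivity
  -- key inequality : exp (μ T) ≤ C * D
  have hkey : Real.exp (μ * T) ≤ C * D := by
    have h1 : L ≤ Real.exp (L - μ * T) + μ * T := by
      nlinarith [Real.add_one_le_exp (L - μ * T)]
    have h2 : Real.exp (L - μ * T) = (T / β) * Real.exp (-(μ * T)) := by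
      rw [sub_eq_add_neg, Real.exp_add, Real.exp_log (by positivity : (0:ℝ) < T / β)]
    rw [h2] at h1
    have he : Real.exp (-(μ * T)) * Real.exp (μ * T) = 1 := by
      rw [← Real.exp_add]; simp
    have h3 : L * Real.exp (μ * T) ≤ T / β + μ * T * Real.exp (μ * T) := by
      nlinarith [Real.exp_pos (μ * T)]
    rw [hCdef, hDdef, div_mul_eq_mul_div, le_div_iff₀ (by positivity)]
    have hTβ : T / β * β = T := div_mul_cancel₀ T (ne_of_gt hβ0)
    nlinarith [Real.exp_pos (μ * T), mul_le_mul_of_nonneg_right h3 hβ0.le]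
  -- step : exp (μ (t-s)) / D ≤ C ^ θ
  have e1 : Real.exp (μ * T) ^ θ = Real.exp (μ * (t - s)) := by
    rw [Real.rpow_def_of_pos (Real.exp_pos _), Real.log_exp]
    congr 1
    rw [hθdef]
    field_simp
  have hDθ : D ^ θ ≤ D := by
    calc D ^ θ ≤ D ^ (1:ℝ) := Real.rpow_le_rpow_of_exponent_le hD1 hθ1
    _ = D := Real.rpow_one D
  have hDθ0 : 0 < D ^ θ := Real.rpow_pos_of_pos hD0 θ
  have hstep : Real.exp (μ * (t - s)) / D ≤ C ^ θ := by
    calc Real.exp (μ * (t - s)) / D ≤ Real.exp (μ * (t - s)) / D ^ θ := by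
          apply div_le_div_of_nonneg_left (Real.exp_pos _).le hDθ0 hDθ
      _ = (Real.exp (μ * T) / D) ^ θ := by
          rw [Real.div_rpow (Real.exp_pos _).le hD0.le, e1]
      _ ≤ C ^ θ := by
          apply Real.rpow_le_rpow (by positivity) _ hθ0
          rw [div_le_iff₀ hD0]
          exact hkey
  -- rewrite LHS
  have hE : Real.exp (μ * T) * Real.exp (-(μ * T)) = 1 := by
    rw [← Real.exp_add]; simp
  have hnum : Real.exp (-μ * (T + s - t)) = Real.exp (μ * (t - s)) * Real.exp (-(μ * T)) := by
    rw [← Real.exp_add]; congr 1; ring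
  have hden : 2 * β * lam + 2 * μ * Real.exp (-μ * T) = 2 * μ * D * Real.exp (-(μ * T)) := by
    have : -μ * T = -(μ * T) := by ring
    rw [this, hDdef, ← hμμ]
    linear_combination (-(2 * β * μ * μ)) * hE
  have hLHS : Real.exp (-μ * (T + s - t)) /
      (2 * β * lam + 2 * μ * Real.exp (-μ * T)) = Real.exp (μ * (t - s)) / (2 * μ * D) := by
    rw [hnum, hden, mul_div_mul_right _ _ (ne_of_gt (Real.exp_pos (-(μ * T))))]
  -- rewrite RHS
  have hst' : (s - t) / T = -θ := by rw [hθdef]; ring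
  have hRHS : (1 / (2 * μ1)) * (β / T) ^ ((s - t) / T) * L ^ ((s - t) / T)
      = (1 / (2 * μ1)) * C ^ θ := by
    rw [hst', Real.rpow_neg (by positivity), Real.rpow_neg hL0.le,
      mul_assoc, ← mul_inv, ← Real.mul_rpow (by positivity) hL0.le]
    congr 2
    rw [hCdef, ← Real.inv_rpow (by positivity)]
    congr 1
    field_simp
  rw [hLHS, hRHS]
  have h2μ : 1 / (2 * μ) ≤ 1 / (2 * μ1) := by
    apply one_div_le_one_div_of_le (by positivity)
    linarith
  calc Real.exp (μ * (t - s)) / (2 * μ * D)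
      = (1 / (2 * μ)) * (Real.exp (μ * (t - s)) / D) := by field_simp
    _ ≤ (1 / (2 * μ1)) * C ^ θ := by
        apply mul_le_mul h2μ hstep (by positivity) (by positivity)
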